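/- Let a, b, c be three distinct candidates in a finite set C and let A be an axis (total order) on C. Consider the two partial orders V1 = {a ≻ c, b ≻ c} and V2 = {b ≻ a, c ≻ a} (transitively closed). Both V1 and V2 can be extended to total orders single-peaked with respect to A if and only if b lies between a and c on A (i.e., a ⊳ b ⊳ c or c ⊳ b ⊳ a). -/

import Mathlib

def VValley {C : Type*} (A V : C → C → Prop) : Prop :=
  ∃ c1 c2 c3 : C, A c1 c2 ∧ A c2 c3 ∧ V c1 c2 ∧ V c3 c2

def UValley {C : Type*} (A V : C → C → Prop) : Prop :=
  ∃ a b c d : C, a ≠ b ∧ a ≠ c ∧ a ≠ d ∧ b ≠ c ∧ b ≠ d ∧ c ≠ d ∧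
    A a b ∧ A b d ∧ A a c ∧ A c d ∧ V a b ∧ V d c

def Extends {C : Type*} (V T : C → C → Prop) : Prop :=
  ∀ x y, V x y → T x y

/-- `V` is a strict partial order: asymmetric and transitive. -/
def IsSPO {C : Type*} (V : C → C → Prop) : Prop :=
  (∀ x y, V x y → ¬ V y x) ∧ (∀ x y z, V x y → V y z → V x z)

/-- `V` is a strict weak order: a strict partial order with transitive incomparability. -/
def IsSWO {C : Type*} (V : C → C → Prop) : Prop :=
  IsSPO V ∧ ∀ x y z, (¬ V x y ∧ ¬ V y x) → (¬ V y z ∧ ¬ V z y) → (¬ V x z ∧ ¬ V z x)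

/-- `V` possibly single-peaked w.r.t. axis `A`: it extends to a total order with no v-valley. -/
def PossSP {C : Type*} (A V : C → C → Prop) : Prop :=
  ∃ T : C → C → Prop, IsStrictTotalOrder C T ∧ Extends V T ∧ ¬ VValley A T

lemma myAsymm {C : Type*} {A : C → C → Prop} (hA : IsStrictTotalOrder C A)
    {x y : C} (h : A x y) : ¬ A y x :=
  fun h' => hA.irrefl x (hA.trans x y x h h')

lemma noVValley_self {C : Type*} {A : C → C → Prop} (hA : IsStrictTotalOrder C A) :
    ¬ VValley A A := by
  rintro ⟨c1, c2, c3, _, h23, _, t32⟩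
  exact myAsymm hA h23 t32

lemma noVValley_flip {C : Type*} {A : C → C → Prop} (hA : IsStrictTotalOrder C A) :
    ¬ VValley A (fun x y => A y x) := by
  rintro ⟨c1, c2, c3, h12, _, t12, _⟩
  exact myAsymm hA h12 t12

lemma flip_STO {C : Type*} {A : C → C → Prop} (hA : IsStrictTotalOrder C A) :
    IsStrictTotalOrder C (fun x y => A y x) where
  trichotomous x y h1 h2 := hA.trichotomous x y h2 h1
  irrefl x h := hA.irrefl x h
  trans x y z h1 h2 := hA.trans z y x h2 h1

theorem stmt10 {C : Type*} [Fintype C] (a b c : C)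
    (hab : a ≠ b) (hac : a ≠ c) (hbc : b ≠ c)
    (A : C → C → Prop) (hA : IsStrictTotalOrder C A) :
    (PossSP A (fun x y => (x = a ∧ y = c) ∨ (x = b ∧ y = c)) ∧
     PossSP A (fun x y => (x = b ∧ y = a) ∨ (x = c ∧ y = a))) ↔
    ((A a b ∧ A b c) ∨ (A c b ∧ A b a)) := by
  constructor
  · rintro ⟨⟨T1, _, hE1, hV1⟩, ⟨T2, _, hE2, hV2⟩⟩
    have hT1ac : T1 a c := hE1 a c (Or.inl ⟨rfl, rfl⟩)
    have hT1bc : T1 b c := hE1 b c (Or.inr ⟨rfl, rfl⟩)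
    have hT2ba : T2 b a := hE2 b a (Or.inl ⟨rfl, rfl⟩)
    have hT2ca : T2 c a := hE2 c a (Or.inr ⟨rfl, rfl⟩)
    rcases @trichotomous_of _ A hA.toTrichotomous a b with hab' | h | hba'
    · rcases @trichotomous_of _ A hA.toTrichotomous b c with hbc' | h | hcb'
      · exact Or.inl ⟨hab', hbc'⟩
      · exact absurd h hbc
      · -- A a b, A c b : b is last or middle; compare a, c
        rcases @trichotomous_of _ A hA.toTrichotomous a c with hac' | h | hca'
        · -- a ⊳ c ⊳ b : valley at c for V1
          exact absurd ⟨a, c, b, hac', hcb', hT1ac, hT1bc⟩ hV1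
        · exact absurd h hac
        · -- c ⊳ a ⊳ b : valley at a for V2
          exact absurd ⟨c, a, b, hca', hab', hT2ca, hT2ba⟩ hV2
    · exact absurd h hab
    · rcases @trichotomous_of _ A hA.toTrichotomous c b with hcb' | h | hbc'
      · exact Or.inr ⟨hcb', hba'⟩
      · exact absurd h.symm hbc
      · -- A b a, A b c : b first; compare a, c
        rcases @trichotomous_of _ A hA.toTrichotomous a c with hac' | h | hca'
        · -- b ⊳ a ⊳ c : valley at a for V2
          exact absurd ⟨b, a, c, hba', hac', hT2ba, hT2ca⟩ hV2
        · exact absurd h hac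
        · -- b ⊳ c ⊳ a : valley at c for V1
          exact absurd ⟨b, c, a, hbc', hca', hT1bc, hT1ac⟩ hV1
  · rintro (⟨hab', hbc'⟩ | ⟨hcb', hba'⟩)
    · refine ⟨⟨A, hA, ?_, noVValley_self hA⟩,
        ⟨fun x y => A y x, flip_STO hA, ?_, noVValley_flip hA⟩⟩
      · rintro x y (⟨rfl, rfl⟩ | ⟨rfl, rfl⟩)
        · exact hA.trans _ b _ hab' hbc'
        · exact hbc'
      · rintro x y (⟨rfl, rfl⟩ | ⟨rfl, rfl⟩)
        · exact hab'
        · exact hA.trans _ b _ hab' hbc'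
    · refine ⟨⟨fun x y => A y x, flip_STO hA, ?_, noVValley_flip hA⟩,
        ⟨A, hA, ?_, noVValley_self hA⟩⟩
      · rintro x y (⟨rfl, rfl⟩ | ⟨rfl, rfl⟩)
        · exact hA.trans _ b _ hcb' hba'
        · exact hcb'
      · rintro x y (⟨rfl, rfl⟩ | ⟨rfl, rfl⟩)
        · exact hba'
        · exact hA.trans _ b _ hcb' hba'
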